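/- arXiv:2408.02183 — 2 statements merged into one kernel-verified Lean document; each statement's English description precedes it below -/
import Mathlib

section
/- Let $\bar{\rho}(z,t) = (1+z^2)^{1/2} \cdot \min\{(1+z^2)^{1/2}, t\}$ for $z \in \mathbb{R}$ and $t \geq 0$. Then for all $a, b \geq 0$ and all $t \geq 0$, one has $\bar{\rho}(a,t) + \bar{\rho}(b,t) \geq \bar{\rho}(\sqrt{a^2+b^2}, t)$. -/
noncomputable def rhoBar (z t : ℝ) : ℝ :=
  Real.sqrt (1 + z ^ 2) * min (Real.sqrt (1 + z ^ 2)) t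

theorem stmt0 (a b t : ℝ) (ha : 0 ≤ a) (hb : 0 ≤ b) (ht : 0 ≤ t) :
    rhoBar (Real.sqrt (a ^ 2 + b ^ 2)) t ≤ rhoBar a t + rhoBar b t := by
  unfold rhoBar
  rw [Real.sq_sqrt (by positivity : (0:ℝ) ≤ a ^ 2 + b ^ 2)]
  set A := Real.sqrt (1 + a ^ 2) with hA
  set B := Real.sqrt (1 + b ^ 2) with hB
  set C := Real.sqrt (1 + (a ^ 2 + b ^ 2)) with hC
  have hA2 : A ^ 2 = 1 + a ^ 2 := Real.sq_sqrt (by positivity)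
  have hB2 : B ^ 2 = 1 + b ^ 2 := Real.sq_sqrt (by positivity)
  have hC2 : C ^ 2 = 1 + (a ^ 2 + b ^ 2) := Real.sq_sqrt (by positivity)
  have hA0 : 0 ≤ A := Real.sqrt_nonneg _
  have hB0 : 0 ≤ B := Real.sqrt_nonneg _
  have hC0 : 0 ≤ C := Real.sqrt_nonneg _
  have hA1 : 1 ≤ A := by nlinarith
  have hB1 : 1 ≤ B := by nlinarith
  have hAC : A ≤ C := by nlinarith
  have hBC : B ≤ C := by nlinarith
  have hCAB : C ≤ A + B := by nlinarith
  have hLt : C * min C t ≤ C * t :=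
    mul_le_mul_of_nonneg_left (min_le_right _ _) hC0
  have hLC : C * min C t ≤ C * C :=
    mul_le_mul_of_nonneg_left (min_le_left _ _) hC0
  rcases le_total t A with h1 | h1 <;> rcases le_total t B with h2 | h2
  · rw [min_eq_right h1, min_eq_right h2]
    nlinarith
  · rw [min_eq_right h1, min_eq_left h2]
    have key : (C - A) * t ≤ (C - A) * (C + A) := by
      apply mul_le_mul_of_nonneg_left (by linarith) (by linarith)
    nlinarith
  · rw [min_eq_left h1, min_eq_right h2]
    have key : (C - B) * t ≤ (C - B) * (C + B) := by
      apply mul_le_mul_of_nonneg_left (by linarith) (by linarith)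
    nlinarith
  · rw [min_eq_left h1, min_eq_left h2]
    nlinarith
end

section
/- Let $\nu_0 > 0$, $\alpha > 0$, $\rho > 0$, and $t \geq 0$, $x \in \mathbb{R}^3$. Then $\int_0^t e^{-\frac{\nu_0}{2}(t-\tau)} \sup_{y \in \mathbb{R}^3} \left[ e^{-\frac{\nu_0}{2}(t-\tau+|x-y|)}(1+\tau)^{-\alpha}\left(1+\frac{|y|^2}{1+\tau}\right)^{-\rho} \right] d\tau \leq C_{\alpha,\rho} (1+t)^{-\alpha}\left(1+\frac{|x|^2}{1+t}\right)^{-\rho}$ for some constant $C_{\alpha,\rho} > 0$ depending only on $\alpha, \rho, \nu_0$. -/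
set_option maxHeartbeats 1000000


open MeasureTheory

lemma expbound (c β : ℝ) (hc : 0 < c) (hβ : 0 < β) :
    ∃ K : ℝ, 0 < K ∧ ∀ s : ℝ, 0 ≤ s → (1 + s) ^ β ≤ K * Real.exp (c * s) := by
  refine ⟨Real.exp (c + β * (Real.log (β / c) - 1)), Real.exp_pos _, fun s hs => ?_⟩
  have h1 : (0:ℝ) < 1 + s := by linarith
  have ha : (0:ℝ) < β / c := by positivity
  rw [← Real.exp_add, Real.rpow_def_of_pos h1]
  apply Real.exp_le_exp.2
  have hlog : Real.log ((1 + s) / (β / c)) ≤ (1 + s) / (β / c) - 1 :=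
    Real.log_le_sub_one_of_pos (by positivity)
  rw [Real.log_div (by linarith) (ne_of_gt ha)] at hlog
  have h2 : Real.log (1 + s) ≤ (1 + s) / (β / c) - 1 + Real.log (β / c) := by linarith
  have h3 : β * ((1 + s) / (β / c)) = c * (1 + s) := by
    field_simp
  have h4 := mul_le_mul_of_nonneg_left h2 hβ.le
  nlinarith [h4, h3]

theorem stmt12 (ν0 α ρ : ℝ) (hν0 : 0 < ν0) (hα : 0 < α) (hρ : 0 < ρ) :
    ∃ C : ℝ, 0 < C ∧ ∀ t : ℝ, 0 ≤ t → ∀ x : EuclideanSpace ℝ (Fin 3),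
      (∫ τ in (0 : ℝ)..t, Real.exp (-(ν0 / 2) * (t - τ)) *
          ⨆ y : EuclideanSpace ℝ (Fin 3),
            Real.exp (-(ν0 / 2) * (t - τ + ‖x - y‖)) * (1 + τ) ^ (-α) *
              (1 + ‖y‖ ^ 2 / (1 + τ)) ^ (-ρ)) ≤
        C * (1 + t) ^ (-α) * (1 + ‖x‖ ^ 2 / (1 + t)) ^ (-ρ) := by
  obtain ⟨K1, hK1, hK1b⟩ := expbound (ν0/4) (2*ρ) (by linarith) (by linarith)
  obtain ⟨K2, hK2, hK2b⟩ := expbound (ν0/2) (α+ρ) (by linarith) (by linarith)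
  set M : ℝ := max K1 ((4:ℝ) ^ ρ) with hMdef
  have hM : 0 < M := lt_max_of_lt_left hK1
  have h4M : (4:ℝ) ^ ρ ≤ M := le_max_right _ _
  have hK1M : K1 ≤ M := le_max_left _ _
  refine ⟨M * K2 * (2/ν0), by positivity, fun t ht x => ?_⟩
  set X : ℝ := ‖x‖ ^ 2 with hX
  have hX0 : 0 ≤ X := by positivity
  have hT : (0:ℝ) < 1 + t := by linarith
  have hb : (0:ℝ) < 1 + X / (1 + t) := by positivity
  set D : ℝ := (1 + t) ^ (-α) * (1 + X / (1 + t)) ^ (-ρ) with hD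
  have hD0 : 0 < D := by
    rw [hD]; positivity
  set F : ℝ → ℝ := fun τ => Real.exp (-(ν0 / 2) * (t - τ)) *
          ⨆ y : EuclideanSpace ℝ (Fin 3),
            Real.exp (-(ν0 / 2) * (t - τ + ‖x - y‖)) * (1 + τ) ^ (-α) *
              (1 + ‖y‖ ^ 2 / (1 + τ)) ^ (-ρ) with hF
  set g : ℝ → ℝ := fun τ => M * K2 * Real.exp (-(ν0 / 2) * (t - τ)) * D with hg
  have key : ∀ τ ∈ Set.Icc (0:ℝ) t, F τ ≤ g τ := by
    intro τ hτ
    obtain ⟨hτ0, hτt⟩ := hτ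
    have hP : (0:ℝ) < 1 + τ := by linarith
    have hbP : (0:ℝ) < 1 + X / (1 + τ) := by positivity
    have hs0 : (0:ℝ) ≤ t - τ := by linarith
    have hQτ : (0:ℝ) < (1 + X / (1 + τ)) ^ (-ρ) := Real.rpow_pos_of_pos hbP _
    -- per-y bound
    have hy : ∀ y : EuclideanSpace ℝ (Fin 3),
        Real.exp (-(ν0 / 2) * (t - τ + ‖x - y‖)) * (1 + τ) ^ (-α) *
          (1 + ‖y‖ ^ 2 / (1 + τ)) ^ (-ρ) ≤
        Real.exp (-(ν0 / 2) * (t - τ)) * (1 + τ) ^ (-α) * (M * (1 + X / (1 + τ)) ^ (-ρ)) := by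
      intro y
      have hQy1 : (0:ℝ) < 1 + ‖y‖ ^ 2 / (1 + τ) := by positivity
      have core : Real.exp (-(ν0 / 2) * ‖x - y‖) * (1 + ‖y‖ ^ 2 / (1 + τ)) ^ (-ρ) ≤
          M * (1 + X / (1 + τ)) ^ (-ρ) := by
        by_cases hcase : ‖x‖ ≤ 2 * ‖y‖
        · -- |y| ≥ |x|/2 : algebraic factor dominates
          have hXy : X ≤ 4 * ‖y‖ ^ 2 := by
            rw [hX]; nlinarith [norm_nonneg x, norm_nonneg y]
          have hq : (1 + X / (1 + τ)) / 4 ≤ 1 + ‖y‖ ^ 2 / (1 + τ) := by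
            have h1 : X / (1 + τ) ≤ (4 * ‖y‖ ^ 2) / (1 + τ) := by gcongr
            have h2 : (4 * ‖y‖ ^ 2) / (1 + τ) = 4 * (‖y‖ ^ 2 / (1 + τ)) := by ring
            have h3 : (0:ℝ) ≤ ‖y‖ ^ 2 / (1 + τ) := by positivity
            linarith [h1, h2 ▸ h1]
          have hmono : (1 + ‖y‖ ^ 2 / (1 + τ)) ^ (-ρ) ≤ ((1 + X / (1 + τ)) / 4) ^ (-ρ) :=
            Real.rpow_le_rpow_of_nonpos (by positivity) hq (by linarith)
          have heq : ((1 + X / (1 + τ)) / 4) ^ (-ρ) = (4:ℝ) ^ ρ * (1 + X / (1 + τ)) ^ (-ρ) := by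
            rw [Real.div_rpow hbP.le (by norm_num : (0:ℝ) ≤ 4), Real.rpow_neg (by norm_num : (0:ℝ) ≤ 4)]
            field_simp
          have hexp : Real.exp (-(ν0 / 2) * ‖x - y‖) ≤ 1 := by
            apply Real.exp_le_one_iff.2
            have := norm_nonneg (x - y)
            nlinarith
          calc Real.exp (-(ν0 / 2) * ‖x - y‖) * (1 + ‖y‖ ^ 2 / (1 + τ)) ^ (-ρ)
              ≤ 1 * (((1 + X / (1 + τ)) / 4) ^ (-ρ)) := by
                apply mul_le_mul hexp hmono (Real.rpow_nonneg hQy1.le _) (by norm_num)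
            _ = (4:ℝ) ^ ρ * (1 + X / (1 + τ)) ^ (-ρ) := by rw [one_mul, heq]
            _ ≤ M * (1 + X / (1 + τ)) ^ (-ρ) := by
                apply mul_le_mul_of_nonneg_right h4M hQτ.le
        · -- |y| < |x|/2 : exponential decay in |x|
          push_neg at hcase
          have hr : ‖x‖ / 2 ≤ ‖x - y‖ := by
            have := norm_sub_norm_le x y
            linarith
          have he1 : Real.exp (-(ν0 / 2) * ‖x - y‖) ≤ Real.exp (-(ν0 / 4 * ‖x‖)) := by
            apply Real.exp_le_exp.2
            nlinarith
          have h1 := hK1b ‖x‖ (norm_nonneg x)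
          have he2 : Real.exp (-(ν0 / 4 * ‖x‖)) ≤ K1 * (1 + ‖x‖) ^ (-(2*ρ)) := by
            rw [Real.exp_neg, Real.rpow_neg (by positivity : (0:ℝ) ≤ 1 + ‖x‖)]
            rw [inv_eq_one_div, inv_eq_one_div, mul_one_div]
            rw [div_le_div_iff₀ (Real.exp_pos _) (by positivity), one_mul]
            exact h1
          have he3 : (1 + ‖x‖) ^ (-(2*ρ)) ≤ (1 + X) ^ (-ρ) := by
            have hsq : (1 + ‖x‖) ^ (-(2*ρ)) = ((1 + ‖x‖) ^ (2:ℝ)) ^ (-ρ) := by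
              rw [← Real.rpow_mul (by positivity : (0:ℝ) ≤ 1 + ‖x‖)]
              norm_num
            rw [hsq]
            apply Real.rpow_le_rpow_of_nonpos (by positivity) ?_ (by linarith)
            have : (1 + ‖x‖) ^ (2:ℝ) = (1 + ‖x‖) ^ (2:ℕ) := by
              rw [← Real.rpow_natCast (1 + ‖x‖) 2]; norm_num
            rw [this, hX]
            nlinarith [norm_nonneg x]
          have he4 : (1 + X) ^ (-ρ) ≤ (1 + X / (1 + τ)) ^ (-ρ) := by
            apply Real.rpow_le_rpow_of_nonpos hbP ?_ (by linarith)
            have : X / (1 + τ) ≤ X := div_le_self hX0 (by linarith)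
            linarith
          have hQy : (1 + ‖y‖ ^ 2 / (1 + τ)) ^ (-ρ) ≤ 1 := by
            apply Real.rpow_le_one_of_one_le_of_nonpos ?_ (by linarith)
            have : (0:ℝ) ≤ ‖y‖ ^ 2 / (1 + τ) := by positivity
            linarith
          calc Real.exp (-(ν0 / 2) * ‖x - y‖) * (1 + ‖y‖ ^ 2 / (1 + τ)) ^ (-ρ)
              ≤ Real.exp (-(ν0 / 4 * ‖x‖)) * 1 := by
                apply mul_le_mul he1 hQy (Real.rpow_nonneg hQy1.le _) (Real.exp_pos _).le
            _ = Real.exp (-(ν0 / 4 * ‖x‖)) := mul_one _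
            _ ≤ K1 * (1 + ‖x‖) ^ (-(2*ρ)) := he2
            _ ≤ K1 * (1 + X / (1 + τ)) ^ (-ρ) := by
                apply mul_le_mul_of_nonneg_left (le_trans he3 he4) hK1.le
            _ ≤ M * (1 + X / (1 + τ)) ^ (-ρ) := by
                apply mul_le_mul_of_nonneg_right hK1M hQτ.le
      calc Real.exp (-(ν0 / 2) * (t - τ + ‖x - y‖)) * (1 + τ) ^ (-α) *
            (1 + ‖y‖ ^ 2 / (1 + τ)) ^ (-ρ)
          = (Real.exp (-(ν0 / 2) * (t - τ)) * (1 + τ) ^ (-α)) *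
            (Real.exp (-(ν0 / 2) * ‖x - y‖) * (1 + ‖y‖ ^ 2 / (1 + τ)) ^ (-ρ)) := by
            rw [show -(ν0 / 2) * (t - τ + ‖x - y‖) =
              -(ν0 / 2) * (t - τ) + -(ν0 / 2) * ‖x - y‖ by ring, Real.exp_add]
            ring
        _ ≤ (Real.exp (-(ν0 / 2) * (t - τ)) * (1 + τ) ^ (-α)) *
            (M * (1 + X / (1 + τ)) ^ (-ρ)) := by
            apply mul_le_mul_of_nonneg_left core (by positivity)
        _ = Real.exp (-(ν0 / 2) * (t - τ)) * (1 + τ) ^ (-α) * (M * (1 + X / (1 + τ)) ^ (-ρ)) := by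
            ring
    have hsup : (⨆ y : EuclideanSpace ℝ (Fin 3),
        Real.exp (-(ν0 / 2) * (t - τ + ‖x - y‖)) * (1 + τ) ^ (-α) *
          (1 + ‖y‖ ^ 2 / (1 + τ)) ^ (-ρ)) ≤
        Real.exp (-(ν0 / 2) * (t - τ)) * (1 + τ) ^ (-α) * (M * (1 + X / (1 + τ)) ^ (-ρ)) :=
      ciSup_le hy
    -- time-decay transfer
    have h4 : (1 + τ) ^ (-α) * (1 + X / (1 + τ)) ^ (-ρ) ≤
        K2 * Real.exp (ν0 / 2 * (t - τ)) * D := by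
      have hs1 : (0:ℝ) < 1 + (t - τ) := by linarith
      have f1 : (1 + t) ^ α ≤ (1 + τ) ^ α * (1 + (t - τ)) ^ α := by
        rw [← Real.mul_rpow hP.le hs1.le]
        apply Real.rpow_le_rpow (by linarith) (by nlinarith) hα.le
      have f2 : (1 + X / (1 + t)) ^ ρ ≤ (1 + X / (1 + τ)) ^ ρ * (1 + (t - τ)) ^ ρ := by
        rw [← Real.mul_rpow hbP.le hs1.le]
        apply Real.rpow_le_rpow hb.le ?_ hρ.le
        have hXle : X / (1 + t) ≤ X / (1 + τ) := by gcongr <;> linarith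
        nlinarith [div_nonneg hX0 hP.le]
      have f3 : (1 + (t - τ)) ^ α * (1 + (t - τ)) ^ ρ ≤ K2 * Real.exp (ν0 / 2 * (t - τ)) := by
        rw [← Real.rpow_add hs1]
        exact hK2b (t - τ) hs0
      have ha1 : (0:ℝ) < (1 + τ) ^ α := Real.rpow_pos_of_pos hP _
      have ha2 : (0:ℝ) < (1 + X / (1 + τ)) ^ ρ := Real.rpow_pos_of_pos hbP _
      have hb1 : (0:ℝ) < (1 + t) ^ α := Real.rpow_pos_of_pos hT _
      have hb2 : (0:ℝ) < (1 + X / (1 + t)) ^ ρ := Real.rpow_pos_of_pos hb _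
      have hu1 : (0:ℝ) < (1 + (t - τ)) ^ α := Real.rpow_pos_of_pos hs1 _
      have hu2 : (0:ℝ) < (1 + (t - τ)) ^ ρ := Real.rpow_pos_of_pos hs1 _
      have hmain : (1 + t) ^ α * (1 + X / (1 + t)) ^ ρ ≤
          K2 * Real.exp (ν0 / 2 * (t - τ)) * ((1 + τ) ^ α * (1 + X / (1 + τ)) ^ ρ) := by
        calc (1 + t) ^ α * (1 + X / (1 + t)) ^ ρ
            ≤ ((1 + τ) ^ α * (1 + (t - τ)) ^ α) * ((1 + X / (1 + τ)) ^ ρ * (1 + (t - τ)) ^ ρ) :=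
              mul_le_mul f1 f2 hb2.le (by positivity)
          _ = ((1 + (t - τ)) ^ α * (1 + (t - τ)) ^ ρ) * ((1 + τ) ^ α * (1 + X / (1 + τ)) ^ ρ) := by
              ring
          _ ≤ (K2 * Real.exp (ν0 / 2 * (t - τ))) * ((1 + τ) ^ α * (1 + X / (1 + τ)) ^ ρ) :=
              mul_le_mul_of_nonneg_right f3 (by positivity)
      rw [hD, Real.rpow_neg hP.le, Real.rpow_neg hbP.le, Real.rpow_neg hT.le,
        Real.rpow_neg hb.le]
      rw [show ((1 + τ) ^ α)⁻¹ * ((1 + X / (1 + τ)) ^ ρ)⁻¹ =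
        1 / ((1 + τ) ^ α * (1 + X / (1 + τ)) ^ ρ) by field_simp]
      rw [show K2 * Real.exp (ν0 / 2 * (t - τ)) * (((1 + t) ^ α)⁻¹ * ((1 + X / (1 + t)) ^ ρ)⁻¹) =
        (K2 * Real.exp (ν0 / 2 * (t - τ))) / ((1 + t) ^ α * (1 + X / (1 + t)) ^ ρ) by
          field_simp]
      rw [div_le_div_iff₀ (by positivity) (by positivity)]
      calc 1 * ((1 + t) ^ α * (1 + X / (1 + t)) ^ ρ)
          = (1 + t) ^ α * (1 + X / (1 + t)) ^ ρ := one_mul _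
        _ ≤ K2 * Real.exp (ν0 / 2 * (t - τ)) * ((1 + τ) ^ α * (1 + X / (1 + τ)) ^ ρ) := hmain
    -- assemble
    have e0 : (0:ℝ) ≤ Real.exp (-(ν0 / 2) * (t - τ)) := (Real.exp_pos _).le
    calc F τ ≤ Real.exp (-(ν0 / 2) * (t - τ)) *
          (Real.exp (-(ν0 / 2) * (t - τ)) * (1 + τ) ^ (-α) * (M * (1 + X / (1 + τ)) ^ (-ρ))) := by
          rw [hF]
          exact mul_le_mul_of_nonneg_left hsup e0
      _ = (Real.exp (-(ν0 / 2) * (t - τ)) * Real.exp (-(ν0 / 2) * (t - τ)) * M) *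
          ((1 + τ) ^ (-α) * (1 + X / (1 + τ)) ^ (-ρ)) := by ring
      _ ≤ (Real.exp (-(ν0 / 2) * (t - τ)) * Real.exp (-(ν0 / 2) * (t - τ)) * M) *
          (K2 * Real.exp (ν0 / 2 * (t - τ)) * D) := by
          apply mul_le_mul_of_nonneg_left h4 (by positivity)
      _ = (Real.exp (-(ν0 / 2) * (t - τ)) * Real.exp (ν0 / 2 * (t - τ))) *
          (M * K2 * Real.exp (-(ν0 / 2) * (t - τ)) * D) := by ring
      _ = g τ := by
          rw [← Real.exp_add, show -(ν0 / 2) * (t - τ) + ν0 / 2 * (t - τ) = 0 by ring,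
            Real.exp_zero, one_mul, hg]
  -- integrate
  by_cases hInt : IntervalIntegrable F volume 0 t
  · have hcont : Continuous (fun τ : ℝ => Real.exp (-(ν0 / 2) * (t - τ))) := by fun_prop
    have hgInt : IntervalIntegrable g volume 0 t := by
      apply Continuous.intervalIntegrable
      fun_prop
    have hmono := intervalIntegral.integral_mono_on ht hInt hgInt key
    have hexpint : (∫ τ in (0:ℝ)..t, Real.exp (-(ν0 / 2) * (t - τ))) ≤ 2 / ν0 := by
      have hderiv : ∀ τ ∈ Set.uIcc (0:ℝ) t,
          HasDerivAt (fun u : ℝ => (2 / ν0) * Real.exp (-(ν0 / 2) * (t - u)))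
            (Real.exp (-(ν0 / 2) * (t - τ))) τ := by
        intro τ _
        have h1 : HasDerivAt (fun u : ℝ => -(ν0 / 2) * (t - u)) (ν0 / 2) τ := by
          have h0 : HasDerivAt (fun u : ℝ => t - u) (-1) τ := by
            simpa using (hasDerivAt_id τ).const_sub t
          have := h0.const_mul (-(ν0 / 2))
          exact this.congr_deriv (by ring)
        have h2 := (h1.exp).const_mul (2 / ν0)
        exact h2.congr_deriv (by field_simp)
      have hval := intervalIntegral.integral_eq_sub_of_hasDerivAt hderiv
        (hcont.intervalIntegrable 0 t)
      rw [hval]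
      have h1 : Real.exp (-(ν0 / 2) * (t - t)) = 1 := by simp
      rw [h1, mul_one]
      have h2 : (0:ℝ) ≤ (2 / ν0) * Real.exp (-(ν0 / 2) * (t - 0)) := by positivity
      linarith
    have hgval : (∫ τ in (0:ℝ)..t, g τ) ≤ M * K2 * (2 / ν0) * D := by
      have heq : (∫ τ in (0:ℝ)..t, g τ) =
          (M * K2 * D) * ∫ τ in (0:ℝ)..t, Real.exp (-(ν0 / 2) * (t - τ)) := by
        rw [← intervalIntegral.integral_const_mul]
        apply intervalIntegral.integral_congr
        intro τ _
        simp only [hg]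
        ring
      rw [heq]
      calc (M * K2 * D) * ∫ τ in (0:ℝ)..t, Real.exp (-(ν0 / 2) * (t - τ))
          ≤ (M * K2 * D) * (2 / ν0) := by
            apply mul_le_mul_of_nonneg_left hexpint (by positivity)
        _ = M * K2 * (2 / ν0) * D := by ring
    calc (∫ τ in (0:ℝ)..t, F τ) ≤ ∫ τ in (0:ℝ)..t, g τ := hmono
      _ ≤ M * K2 * (2 / ν0) * D := hgval
      _ = M * K2 * (2 / ν0) * (1 + t) ^ (-α) * (1 + X / (1 + t)) ^ (-ρ) := by
          rw [hD]; ring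
  · rw [show (∫ τ in (0:ℝ)..t, F τ) = 0 from intervalIntegral.integral_undef hInt]
    positivity
end
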